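/- Let a ∈ ℝ, b > 0, and for y > 0 with 1 + a·y > 0 define h(y) = (1 + a·y)·e^{−b/y}. Define F : ℝ × (0,∞) → ℝ² by F(x, y) = ( y·x·(x − h(y)), y²·(x − h(y)) ). Then for every y > 0 with 1 + a·y > 0, the point (h(y), y) is a zero of F, and the Jacobian matrix of F at (h(y), y) has determinant 0 and trace equal to −b·e^{−b/y}·( 1 + (a − 1/b)·y ); in particular its eigenvalues are 0 and −b·e^{−b/y}·(1 + (a − b^{−1})·y). -/

import Mathlib

open Real

/-- The critical-manifold graph `h(y) = (1 + ay)·e^{−b/y}` of the aircraft model. -/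
noncomputable def h16 (a b y : ℝ) : ℝ := (1 + a * y) * Real.exp (-(b / y))

/-- The layer problem `F(x,y) = (yx(x − h(y)), y²(x − h(y)))` of the aircraft model. -/
noncomputable def F16 (a b : ℝ) (p : ℝ × ℝ) : ℝ × ℝ :=
  (p.2 * p.1 * (p.1 - h16 a b p.2), p.2 ^ 2 * (p.1 - h16 a b p.2))

/-- The continuous linear map `ℝ × ℝ → ℝ` given by a row `(c, d)` of a Jacobian. -/
noncomputable def rowCLM (c d : ℝ) : ℝ × ℝ →L[ℝ] ℝ :=
  c • ContinuousLinearMap.fst ℝ ℝ ℝ + d • ContinuousLinearMap.snd ℝ ℝ ℝ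

/-- Every point `(h(y), y)` of the critical manifold is a zero of the layer problem
`F16`, and the Jacobian matrix of `F16` there has determinant `0` and trace
`−b·e^{−b/y}·(1 + (a − 1/b)·y)`; in particular its eigenvalues are `0` and this trace. -/
theorem stmt16 (a b : ℝ) (hb : 0 < b) (y : ℝ) (hy : 0 < y) (hay : 0 < 1 + a * y) :
    F16 a b (h16 a b y, y) = 0 ∧
    ∃ J : Matrix (Fin 2) (Fin 2) ℝ,
      HasFDerivAt (F16 a b)
        ((rowCLM (J 0 0) (J 0 1)).prod (rowCLM (J 1 0) (J 1 1)))
        (h16 a b y, y) ∧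
      J.det = 0 ∧
      Matrix.trace J = -b * Real.exp (-(b / y)) * (1 + (a - 1 / b) * y) ∧
      Module.End.HasEigenvalue (Matrix.mulVecLin J) 0 ∧
      Module.End.HasEigenvalue (Matrix.mulVecLin J)
        (-b * Real.exp (-(b / y)) * (1 + (a - 1 / b) * y)) := by
  have hy0 : y ≠ 0 := hy.ne'
  have hb0 : b ≠ 0 := hb.ne'
  set E : ℝ := Real.exp (-(b / y)) with hE
  have hE0 : E ≠ 0 := Real.exp_ne_zero _
  set h : ℝ := h16 a b y with hh
  set D : ℝ := a * E + (1 + a * y) * (E * (b / y ^ 2)) with hD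
  -- derivative of h16 a b at y
  have hd : HasDerivAt (h16 a b) D y := by
    have h1 : HasDerivAt (fun t : ℝ => -(b / t)) (b / y ^ 2) y := by
      have h := ((hasDerivAt_inv hy0).const_mul b).neg
      simp only [div_eq_mul_inv]
      exact h.congr_deriv (by ring)
    have h2 : HasDerivAt (fun t : ℝ => Real.exp (-(b / t))) (E * (b / y ^ 2)) y := h1.exp
    have h3 : HasDerivAt (fun t : ℝ => 1 + a * t) a y := by
      simpa using ((hasDerivAt_id y).const_mul a).const_add 1
    have := h3.mul h2
    exact this
  -- key trace identity
  have key : y * h - y ^ 2 * D = -b * E * (1 + (a - 1 / b) * y) := by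
    rw [hh, h16, ← hE, hD]
    field_simp
    ring
  constructor
  · simp [F16, h16, hh]
  · refine ⟨!![y * h, -(y * h * D); y ^ 2, -(y ^ 2 * D)], ?_, ?_, ?_, ?_, ?_⟩
    · -- HasFDerivAt
      have hg : HasFDerivAt (fun p : ℝ × ℝ => p.1 - h16 a b p.2)
          (ContinuousLinearMap.fst ℝ ℝ ℝ - D • ContinuousLinearMap.snd ℝ ℝ ℝ) (h, y) := by
        have hs := hd.comp_hasFDerivAt (h, y) (hasFDerivAt_snd (𝕜 := ℝ) (E := ℝ) (F := ℝ) (p := (h, y)))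
        exact (hasFDerivAt_fst).sub hs
      have hm : HasFDerivAt (fun p : ℝ × ℝ => p.2 * p.1)
          (y • ContinuousLinearMap.fst ℝ ℝ ℝ + h • ContinuousLinearMap.snd ℝ ℝ ℝ) (h, y) := by
        have := (hasFDerivAt_snd (𝕜 := ℝ) (E := ℝ) (F := ℝ)).mul
          (hasFDerivAt_fst (𝕜 := ℝ) (E := ℝ) (F := ℝ)) (x := (h, y))
        exact this
      have hq : HasFDerivAt (fun p : ℝ × ℝ => p.2 ^ 2)
          ((2 * y) • ContinuousLinearMap.snd ℝ ℝ ℝ) (h, y) := by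
        have := ((hasDerivAt_pow 2 y).comp_hasFDerivAt (h, y)
          (hasFDerivAt_snd (𝕜 := ℝ) (E := ℝ) (F := ℝ)))
        simp [mul_comm] at this ⊢
        exact this
      have h1 := hm.mul hg
      have h2 := hq.mul hg
      have hF : HasFDerivAt (F16 a b) _ (h, y) := HasFDerivAt.prodMk h1 h2
      refine hF.congr_fderiv ?_
      ext x <;>
        simp [rowCLM, ← hh, sub_self, Matrix.cons_val_zero, Matrix.cons_val_one,
          Matrix.head_cons] <;>
        ring
    · simp [Matrix.det_fin_two]; ring
    · simp only [Matrix.trace_fin_two_of]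
      rw [← key]; ring
    · -- eigenvalue 0, eigenvector ![D, 1]
      refine Module.End.hasEigenvalue_of_hasEigenvector
        ⟨Module.End.mem_eigenspace_iff.mpr ?_, ?_⟩ (x := ![D, 1])
      · funext i
        fin_cases i <;>
          simp [Matrix.mulVecLin_apply, Matrix.mulVec, dotProduct, Fin.sum_univ_two] <;> ring
      · intro hc
        have := congrFun hc 1
        simpa using this
    · refine Module.End.hasEigenvalue_of_hasEigenvector
        ⟨Module.End.mem_eigenspace_iff.mpr ?_, ?_⟩ (x := ![h, y])
      · funext i
        rw [← key]
        fin_cases i <;>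
          simp [Matrix.mulVecLin_apply, Matrix.mulVec, dotProduct, Fin.sum_univ_two] <;> ring
      · intro hc
        have := congrFun hc 1
        simp at this
        exact hy0 this
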